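/- arXiv:2312.08123 — 4 statements merged into one kernel-verified Lean document; each statement's English description precedes it below -/
import Mathlib

section
/- On a compact oriented two-dimensional Riemannian manifold (M,g) with smooth boundary, for every u ∈ C_c^∞(SM^int) the Pestov identity holds: ‖VXu‖² = ‖XVu‖² - (K Vu, Vu) + ‖Xu‖², where norms and inner products are in L²(SM). -/
open scoped RealInnerProductSpace

/-- The Pestov identity. Here `X`, `V`, `Xp = X_⊥` are the geodesic, vertical and
perpendicular vector fields acting on smooth functions on the unit sphere bundle `SM`
of a compact oriented 2D Riemannian manifold with boundary, regarded as skew-adjoint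
operators in `L²(SM)` (on functions compactly supported in the interior), `K` is
multiplication by the Gaussian curvature, and the structure equations
`[X,V] = X_⊥`, `[V,X_⊥] = X`, `[X,X_⊥] = -KV` hold. Then for every such `u`:
`‖VXu‖² = ‖XVu‖² - (KVu, Vu) + ‖Xu‖²`. -/
theorem pestov_identity
    {E : Type*} [NormedAddCommGroup E] [InnerProductSpace ℝ E]
    (X V Xp K : E →ₗ[ℝ] E)
    (hX : ∀ u w : E, ⟪X u, w⟫ = -⟪u, X w⟫)
    (hV : ∀ u w : E, ⟪V u, w⟫ = -⟪u, V w⟫)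
    (hXp : ∀ u w : E, ⟪Xp u, w⟫ = -⟪u, Xp w⟫)
    (hK : ∀ u w : E, ⟪K u, w⟫ = ⟪u, K w⟫)
    (c1 : X ∘ₗ V - V ∘ₗ X = Xp)
    (c2 : V ∘ₗ Xp - Xp ∘ₗ V = X)
    (c3 : X ∘ₗ Xp - Xp ∘ₗ X = -(K ∘ₗ V))
    (u : E) :
    ‖V (X u)‖ ^ 2 = ‖X (V u)‖ ^ 2 - ⟪K (V u), V u⟫ + ‖X u‖ ^ 2 := by
  have e1 : ∀ z : E, X (V z) - V (X z) = Xp z := by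
    intro z
    have := LinearMap.congr_fun c1 z
    simpa using this
  have e2 : ∀ z : E, V (Xp z) - Xp (V z) = X z := by
    intro z
    have := LinearMap.congr_fun c2 z
    simpa using this
  have e3 : ∀ z : E, X (Xp z) - Xp (X z) = -(K (V z)) := by
    intro z
    have := LinearMap.congr_fun c3 z
    simpa using this
  -- key operator identity applied to u
  have h1 := e1 (V (X u))
  have h2 : V (X (X (V u))) - V (X (V (X u))) = V (X (Xp u)) := by
    have := congrArg (fun z => V (X z)) (e1 u)
    simpa [map_sub] using this
  have h3 := e2 (X u)
  have h4 : V (X (Xp u)) - V (Xp (X u)) = -(V (K (V u))) := by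
    have := congrArg V (e3 u)
    simpa [map_sub, map_neg] using this
  have key : X (V (V (X u))) - V (X (X (V u))) = -(X (X u)) + V (K (V u)) := by
    calc X (V (V (X u))) - V (X (X (V u)))
        = (X (V (V (X u))) - V (X (V (X u))))
            - (V (X (X (V u))) - V (X (V (X u)))) := by abel
      _ = Xp (V (X u)) - V (X (Xp u)) := by rw [h1, h2]
      _ = -(V (Xp (X u)) - Xp (V (X u)))
            + -(V (X (Xp u)) - V (Xp (X u))) := by abel
      _ = -(X (X u)) + V (K (V u)) := by rw [h3, h4, neg_neg]
  have n1 : ⟪u, X (V (V (X u)))⟫ = ⟪V (X u), V (X u)⟫ := by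
    have a := hX u (V (V (X u)))
    have b := hV (X u) (V (X u))
    linarith
  have n2 : ⟪u, V (X (X (V u)))⟫ = ⟪X (V u), X (V u)⟫ := by
    have a := hV u (X (X (V u)))
    have b := hX (V u) (X (V u))
    linarith
  have n3 : ⟪u, X (X u)⟫ = -⟪X u, X u⟫ := by
    have a := hX u (X u)
    linarith
  have n4 : ⟪u, V (K (V u))⟫ = -⟪K (V u), V u⟫ := by
    have a := hV u (K (V u))
    have b : ⟪K (V u), V u⟫ = ⟪V u, K (V u)⟫ := real_inner_comm _ _
    linarith
  have main := congrArg (fun z => ⟪u, z⟫) key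
  simp only [inner_sub_right, inner_add_right, inner_neg_right] at main
  rw [n1, n2, n3, n4] at main
  rw [← real_inner_self_eq_norm_sq, ← real_inner_self_eq_norm_sq,
    ← real_inner_self_eq_norm_sq]
  linarith
end

section
/- Let F: [0,T] → M_n(ℝ) be a continuous symmetric-matrix-valued function and let H₀ be a complex symmetric n×n matrix with positive definite imaginary part. Let (Z(t), Y(t)) solve the linear system Ż = F Y, Ẏ = Z with Z(0) = H₀, Y(0) = I. Then Y(t) is invertible for all t ∈ [0,T]. -/
open Matrix
attribute [local instance] Matrix.normedAddCommGroup Matrix.normedSpace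

/-- For the linear system `Ż = FY`, `Ẏ = Z` with `F` continuous, real and symmetric,
`Z(0) = H₀` complex symmetric with positive definite imaginary part and `Y(0) = I`,
the matrix `Y(t)` is invertible for all `t ∈ [0,T]`. -/
theorem riccati_linearization_invertible {n : ℕ} {T : ℝ} (hT : 0 ≤ T)
    (F : ℝ → Matrix (Fin n) (Fin n) ℝ)
    (hFc : ContinuousOn F (Set.Icc 0 T))
    (hFsym : ∀ t ∈ Set.Icc (0:ℝ) T, (F t)ᵀ = F t)
    (H₀ : Matrix (Fin n) (Fin n) ℂ)
    (hH₀sym : H₀ᵀ = H₀)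
    (hH₀im : (H₀.map Complex.im).PosDef)
    (Z Y : ℝ → Matrix (Fin n) (Fin n) ℂ)
    (hZ : ∀ t ∈ Set.Icc (0:ℝ) T, HasDerivAt Z ((F t).map (fun x : ℝ => (x : ℂ)) * Y t) t)
    (hY : ∀ t ∈ Set.Icc (0:ℝ) T, HasDerivAt Y (Z t) t)
    (hZ0 : Z 0 = H₀) (hY0 : Y 0 = 1) :
    ∀ t ∈ Set.Icc (0:ℝ) T, IsUnit (Y t) := by
  classical
  -- entrywise derivatives
  have hZe : ∀ t ∈ Set.Icc (0:ℝ) T, ∀ k j, HasDerivAt (fun s => Z s k j)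
      (((F t).map (fun x : ℝ => (x : ℂ)) * Y t) k j) t := fun t ht k j =>
    (hasDerivAt_pi.mp ((hasDerivAt_pi.mp (hZ t ht)) k)) j
  have hYe : ∀ t ∈ Set.Icc (0:ℝ) T, ∀ k j, HasDerivAt (fun s => Y s k j) (Z t k j) t :=
    fun t ht k j => (hasDerivAt_pi.mp ((hasDerivAt_pi.mp (hY t ht)) k)) j
  -- the conserved quantity
  set w : Fin n → Fin n → ℝ → ℂ := fun i j s =>
    ∑ k, (star (Y s k i) * Z s k j - star (Z s k i) * Y s k j) with hw_def
  have hwderiv : ∀ i j, ∀ t ∈ Set.Icc (0:ℝ) T, HasDerivAt (w i j) 0 t := by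
    intro i j t ht
    set D : Matrix (Fin n) (Fin n) ℂ := (F t).map (fun x : ℝ => (x : ℂ)) with hD
    have h1 : HasDerivAt (w i j)
        (∑ k, ((star (Z t k i) * Z t k j + star (Y t k i) * (D * Y t) k j)
          - (star ((D * Y t) k i) * Y t k j + star (Z t k i) * Z t k j))) t := by
      apply HasDerivAt.fun_sum
      intro k _
      exact ((hYe t ht k i).star.mul (hZe t ht k j)).sub
        ((hZe t ht k i).star.mul (hYe t ht k j))
    have main : ∑ k, star (Y t k i) * (D * Y t) k j = ∑ k, star ((D * Y t) k i) * Y t k j := by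
      have hFs : ∀ k l, F t k l = F t l k := by
        intro k l
        conv_lhs => rw [← hFsym t ht]
        exact Matrix.transpose_apply _ _ _
      calc ∑ k, star (Y t k i) * (D * Y t) k j
          = ∑ k, ∑ l, star (Y t k i) * (((F t k l : ℂ)) * Y t l j) := by
            refine Finset.sum_congr rfl fun k _ => ?_
            simp [Matrix.mul_apply, Matrix.map_apply, Finset.mul_sum, hD]
        _ = ∑ l, ∑ k, star (Y t k i) * (((F t k l : ℂ)) * Y t l j) := Finset.sum_comm
        _ = ∑ k, ∑ l, star ((((F t k l : ℂ)) * Y t l i)) * Y t k j := by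
            refine Finset.sum_congr rfl fun k _ => Finset.sum_congr rfl fun l _ => ?_
            rw [hFs l k]
            simp [Complex.conj_ofReal]
            ring
        _ = ∑ k, star ((D * Y t) k i) * Y t k j := by
            refine Finset.sum_congr rfl fun k _ => ?_
            simp [Matrix.mul_apply, Matrix.map_apply, Finset.sum_mul, hD]
    have h2 : (∑ k, ((star (Z t k i) * Z t k j + star (Y t k i) * (D * Y t) k j)
          - (star ((D * Y t) k i) * Y t k j + star (Z t k i) * Z t k j))) = 0 := by
      have : ∀ k : Fin n, (star (Z t k i) * Z t k j + star (Y t k i) * (D * Y t) k j)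
          - (star ((D * Y t) k i) * Y t k j + star (Z t k i) * Z t k j)
          = star (Y t k i) * (D * Y t) k j - star ((D * Y t) k i) * Y t k j := fun k => by ring
      rw [Finset.sum_congr rfl (fun k _ => this k), Finset.sum_sub_distrib, main, sub_self]
    exact h2 ▸ h1
  -- constancy of w
  have hconst : ∀ i j, ∀ t ∈ Set.Icc (0:ℝ) T, w i j t = w i j 0 := by
    intro i j
    apply constant_of_has_deriv_right_zero
    · exact fun s hs => ((hwderiv i j s hs).continuousAt).continuousWithinAt
    · exact fun s hs => ((hwderiv i j s (Set.Ico_subset_Icc_self hs)).hasDerivWithinAt)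
  -- initial value
  have hw0 : ∀ i j, w i j 0 = H₀ i j - star (H₀ i j) := by
    intro i j
    have hsym : H₀ j i = H₀ i j := by
      conv_lhs => rw [← hH₀sym]
      exact Matrix.transpose_apply _ _ _
    simp only [hw_def, hZ0, hY0, Matrix.one_apply]
    rw [Finset.sum_sub_distrib]
    congr 1
    · rw [Finset.sum_eq_single i]
      · simp
      · intro k _ hk; simp [hk]
      · simp
    · rw [Finset.sum_eq_single j]
      · simp [hsym]
      · intro k _ hk; simp [hk]
      · simp
  -- main argument
  intro t ht
  rw [Matrix.isUnit_iff_isUnit_det, isUnit_iff_ne_zero]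
  intro hdet
  obtain ⟨v, hvne, hv⟩ := (Matrix.exists_mulVec_eq_zero_iff).mpr hdet
  have hvk : ∀ k, ∑ j, Y t k j * v j = 0 := by
    intro k
    have := congrFun hv k
    simpa [Matrix.mulVec, dotProduct] using this
  have hvk' : ∀ k, ∑ i, star (v i) * star (Y t k i) = 0 := by
    intro k
    have e : (∑ i, star (v i) * star (Y t k i)) = star (∑ i, Y t k i * v i) := by
      rw [star_sum]
      exact Finset.sum_congr rfl fun i _ => by rw [star_mul']; ring
    rw [e, hvk k, star_zero]
  -- S = 0
  have hS0 : ∑ i, ∑ j, star (v i) * w i j t * v j = 0 := by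
    have expand : ∀ i j, star (v i) * w i j t * v j
        = ∑ k, ((star (v i) * star (Y t k i)) * (Z t k j * v j)
          - (star (v i) * star (Z t k i)) * (Y t k j * v j)) := by
      intro i j
      simp only [hw_def]
      rw [Finset.mul_sum, Finset.sum_mul]
      exact Finset.sum_congr rfl fun k _ => by ring
    calc ∑ i, ∑ j, star (v i) * w i j t * v j
        = ∑ i, ∑ k, ∑ j, ((star (v i) * star (Y t k i)) * (Z t k j * v j)
            - (star (v i) * star (Z t k i)) * (Y t k j * v j)) := by
          refine Finset.sum_congr rfl fun i _ => ?_
          rw [Finset.sum_congr rfl fun j _ => expand i j]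
          exact Finset.sum_comm
      _ = ∑ k, ∑ i, ∑ j, ((star (v i) * star (Y t k i)) * (Z t k j * v j)
            - (star (v i) * star (Z t k i)) * (Y t k j * v j)) := Finset.sum_comm
      _ = 0 := by
          refine Finset.sum_eq_zero fun k _ => ?_
          have e : ∑ i, ∑ j, ((star (v i) * star (Y t k i)) * (Z t k j * v j)
              - (star (v i) * star (Z t k i)) * (Y t k j * v j))
              = (∑ i, star (v i) * star (Y t k i)) * (∑ j, Z t k j * v j)
                - (∑ i, star (v i) * star (Z t k i)) * (∑ j, Y t k j * v j) := by
            rw [Finset.sum_mul_sum, Finset.sum_mul_sum, ← Finset.sum_sub_distrib]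
            exact Finset.sum_congr rfl fun i _ => by rw [← Finset.sum_sub_distrib]
          rw [e, hvk' k, hvk k, zero_mul, mul_zero, sub_zero]
  -- S = a - star a
  set a : ℂ := ∑ i, ∑ j, star (v i) * H₀ i j * v j with ha_def
  have hS2 : ∑ i, ∑ j, star (v i) * w i j t * v j = a - star a := by
    have e1 : ∀ i j, star (v i) * w i j t * v j
        = star (v i) * H₀ i j * v j - star (v i) * star (H₀ i j) * v j := by
      intro i j
      rw [hconst i j t ht, hw0 i j]
      ring
    have e2 : star a = ∑ i, ∑ j, star (v i) * star (H₀ i j) * v j := by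
      have hsym : ∀ i j, H₀ j i = H₀ i j := by
        intro i j
        conv_lhs => rw [← hH₀sym]
        exact Matrix.transpose_apply _ _ _
      rw [ha_def, star_sum]
      rw [show ∑ i, star (∑ j, star (v i) * H₀ i j * v j)
          = ∑ i, ∑ j, v i * star (H₀ i j) * star (v j) by
        refine Finset.sum_congr rfl fun i _ => ?_
        rw [star_sum]
        refine Finset.sum_congr rfl fun j _ => ?_
        simp only [star_mul', star_star]]
      rw [Finset.sum_comm]
      refine Finset.sum_congr rfl fun j _ => Finset.sum_congr rfl fun i _ => ?_
      rw [hsym j i]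
      ring
    calc ∑ i, ∑ j, star (v i) * w i j t * v j
        = ∑ i, ∑ j, (star (v i) * H₀ i j * v j - star (v i) * star (H₀ i j) * v j) := by
          exact Finset.sum_congr rfl fun i _ => Finset.sum_congr rfl fun j _ => e1 i j
      _ = a - star a := by
          rw [e2, ha_def, ← Finset.sum_sub_distrib]
          exact Finset.sum_congr rfl fun i _ => by rw [← Finset.sum_sub_distrib]
  have haim : a.im = 0 := by
    have : a = star a := by
      have := hS0.symm.trans hS2
      linear_combination -this
    have := congrArg Complex.im this
    simp only [Complex.star_def, Complex.conj_im] at this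
    linarith
  -- positivity of Im a
  set x : Fin n → ℝ := fun i => (v i).re with hx_def
  set y : Fin n → ℝ := fun i => (v i).im with hy_def
  set B : Matrix (Fin n) (Fin n) ℝ := H₀.map Complex.im with hB_def
  set A : Matrix (Fin n) (Fin n) ℝ := H₀.map Complex.re with hA_def
  have him : a.im = (∑ i, ∑ j, A i j * (x i * y j - y i * x j))
      + (∑ i, ∑ j, B i j * (x i * x j + y i * y j)) := by
    rw [ha_def, Complex.im_sum, ← Finset.sum_add_distrib]
    refine Finset.sum_congr rfl fun i _ => ?_
    rw [Complex.im_sum, ← Finset.sum_add_distrib]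
    refine Finset.sum_congr rfl fun j _ => ?_
    simp only [Complex.mul_im, Complex.mul_re, Complex.star_def, Complex.conj_re,
      Complex.conj_im, hA_def, hB_def, Matrix.map_apply, hx_def, hy_def]
    ring
  have hAzero : (∑ i, ∑ j, A i j * (x i * y j - y i * x j)) = 0 := by
    have hAsym : ∀ i j, A j i = A i j := by
      intro i j
      simp only [hA_def, Matrix.map_apply]
      conv_lhs => rw [← hH₀sym]
      exact congrArg Complex.re (Matrix.transpose_apply _ _ _)
    have : (∑ i, ∑ j, A i j * (x i * y j - y i * x j))
        = -(∑ i, ∑ j, A i j * (x i * y j - y i * x j)) := by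
      conv_lhs => rw [Finset.sum_comm]
      rw [← Finset.sum_neg_distrib]
      refine Finset.sum_congr rfl fun i _ => ?_
      rw [← Finset.sum_neg_distrib]
      refine Finset.sum_congr rfl fun j _ => ?_
      rw [hAsym j i]
      ring
    linarith
  have hBdot : ∀ u : Fin n → ℝ, (∑ i, ∑ j, B i j * (u i * u j)) = star u ⬝ᵥ (B *ᵥ u) := by
    intro u
    simp only [dotProduct, Matrix.mulVec, dotProduct, Pi.star_apply, star_trivial,
      Finset.mul_sum]
    exact Finset.sum_congr rfl fun i _ => Finset.sum_congr rfl fun j _ => by ring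
  have hxy : x ≠ 0 ∨ y ≠ 0 := by
    by_contra h
    push_neg at h
    apply hvne
    funext i
    have h1 := congrFun h.1 i
    have h2 := congrFun h.2 i
    simp only [hx_def, hy_def, Pi.zero_apply] at h1 h2
    exact Complex.ext h1 h2
  have hpos : 0 < (∑ i, ∑ j, B i j * (x i * x j + y i * y j)) := by
    have split : (∑ i, ∑ j, B i j * (x i * x j + y i * y j))
        = (∑ i, ∑ j, B i j * (x i * x j)) + (∑ i, ∑ j, B i j * (y i * y j)) := by
      rw [← Finset.sum_add_distrib]
      refine Finset.sum_congr rfl fun i _ => ?_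
      rw [← Finset.sum_add_distrib]
      exact Finset.sum_congr rfl fun j _ => by ring
    rw [split, hBdot x, hBdot y]
    rcases hxy with hx | hy
    · have h1 := hH₀im.dotProduct_mulVec_pos hx
      have h2 := hH₀im.posSemidef.dotProduct_mulVec_nonneg y
      linarith
    · have h1 := hH₀im.posSemidef.dotProduct_mulVec_nonneg x
      have h2 := hH₀im.dotProduct_mulVec_pos hy
      linarith
  rw [him, hAzero, zero_add] at haim
  linarith
end

section
/- Let F: [0,T] → M_n(ℝ) be continuous symmetric-matrix valued and H₀ a complex symmetric matrix with Im(H₀) positive definite. Then the matrix Riccati equation Ḣ(t) + H(t)² = F(t), H(0) = H₀, has a (unique) solution H: [0,T] → M_n(ℂ) defined on all of [0,T], given by H(t) = Z(t) Y(t)^{-1} where Ż = FY, Ẏ = Z, Z(0) = H₀, Y(0) = I. -/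
open Matrix

attribute [local instance] Matrix.normedAddCommGroup Matrix.normedSpace


theorem matEntry {n : ℕ} {f : ℝ → Matrix (Fin n) (Fin n) ℂ} {f' : Matrix (Fin n) (Fin n) ℂ}
    {t : ℝ} :
    HasDerivAt f f' t ↔ ∀ i j, HasDerivAt (fun s => f s i j) (f' i j) t := by
  exact hasDerivAt_pi.trans (forall_congr' fun i => hasDerivAt_pi)

theorem matEntryD {n : ℕ} {f : ℝ → Matrix (Fin n) (Fin n) ℂ} {t : ℝ} :
    DifferentiableAt ℝ f t ↔ ∀ i j, DifferentiableAt ℝ (fun s => f s i j) t := by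
  exact differentiableAt_pi.trans (forall_congr' fun i => differentiableAt_pi)

theorem matMulDeriv {n : ℕ} {f g : ℝ → Matrix (Fin n) (Fin n) ℂ}
    {f' g' : Matrix (Fin n) (Fin n) ℂ}
    {t : ℝ} (hf : HasDerivAt f f' t) (hg : HasDerivAt g g' t) :
    HasDerivAt (fun s => f s * g s) (f' * g t + f t * g') t := by
  rw [matEntry] at hf hg ⊢
  intro i j
  have : ∀ s, (f s * g s) i j = ∑ k, f s i k * g s k j := fun s => Matrix.mul_apply
  simp only [this, Matrix.add_apply, Matrix.mul_apply]
  rw [← Finset.sum_add_distrib]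
  exact HasDerivAt.fun_sum fun k _ => ((hf i k).mul (hg k j)).congr_deriv (by ring)

theorem matCTDeriv {n : ℕ} {f : ℝ → Matrix (Fin n) (Fin n) ℂ} {f' : Matrix (Fin n) (Fin n) ℂ}
    {t : ℝ} (hf : HasDerivAt f f' t) :
    HasDerivAt (fun s => (f s)ᴴ) f'ᴴ t := by
  rw [matEntry] at hf ⊢
  intro i j
  exact Complex.conjCLE.toContinuousLinearMap.hasFDerivAt.comp_hasDerivAt t (hf j i)

theorem matDetD {n : ℕ} {Y : ℝ → Matrix (Fin n) (Fin n) ℂ} {t : ℝ}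
    (h : ∀ i j, DifferentiableAt ℝ (fun s => Y s i j) t) :
    DifferentiableAt ℝ (fun s => (Y s).det) t := by
  simp only [Matrix.det_apply]
  apply DifferentiableAt.fun_sum
  intro σ _
  simp only [Units.smul_def, zsmul_eq_mul]
  exact (differentiableAt_const _).mul (DifferentiableAt.fun_finsetProd fun i _ => h (σ i) i)

theorem matAdjD {n : ℕ} {Y : ℝ → Matrix (Fin n) (Fin n) ℂ} {t : ℝ}
    (h : ∀ i j, DifferentiableAt ℝ (fun s => Y s i j) t) (i j : Fin n) :
    DifferentiableAt ℝ (fun s => (Y s).adjugate i j) t := by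
  simp only [Matrix.adjugate_apply]
  apply matDetD
  intro a b
  simp only [Matrix.updateRow_apply]
  split_ifs
  · exact differentiableAt_const _
  · exact h a b

theorem matInvD {n : ℕ} {Y : ℝ → Matrix (Fin n) (Fin n) ℂ} {t : ℝ}
    (h : ∀ i j, DifferentiableAt ℝ (fun s => Y s i j) t) (hdet : (Y t).det ≠ 0) :
    DifferentiableAt ℝ (fun s => (Y s)⁻¹) t := by
  rw [matEntryD]
  intro i j
  have e : ∀ s, (Y s)⁻¹ i j = ((Y s).det)⁻¹ * (Y s).adjugate i j := by
    intro s
    rw [Matrix.inv_def, Ring.inverse_eq_inv']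
    simp [Matrix.smul_apply, smul_eq_mul]
  simp only [e]
  exact ((matDetD h).inv hdet).mul (matAdjD h i j)

theorem posdef_dot {n : ℕ} {M : Matrix (Fin n) (Fin n) ℝ} (hM : M.PosDef) {v : Fin n → ℂ}
    (hv : v ≠ 0) : star v ⬝ᵥ ((M.map (fun x : ℝ => (x:ℂ))) *ᵥ v) ≠ 0 := by
  set a : Fin n → ℝ := fun i => (v i).re with ha
  set b : Fin n → ℝ := fun i => (v i).im with hb
  have key : (star v ⬝ᵥ ((M.map (fun x : ℝ => (x:ℂ))) *ᵥ v)).re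
      = a ⬝ᵥ M *ᵥ a + b ⬝ᵥ M *ᵥ b := by
    simp only [dotProduct, mulVec, Matrix.map_apply, Pi.star_apply, Finset.mul_sum,
      Complex.re_sum, ← Finset.sum_add_distrib]
    refine Finset.sum_congr rfl fun i _ => ?_
    refine Finset.sum_congr rfl fun j _ => ?_
    simp only [Complex.mul_re, Complex.mul_im, Complex.ofReal_re, Complex.ofReal_im,
      RCLike.star_def, Complex.conj_re, Complex.conj_im, ha, hb]
    ring
  have hab : a ≠ 0 ∨ b ≠ 0 := by
    by_contra hc
    push_neg at hc
    apply hv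
    funext i
    have h1 : a i = 0 := by rw [hc.1]; rfl
    have h2 : b i = 0 := by rw [hc.2]; rfl
    exact Complex.ext h1 h2
  have hpos : 0 < a ⬝ᵥ M *ᵥ a + b ⬝ᵥ M *ᵥ b := by
    rcases hab with h | h
    · have := hM.dotProduct_mulVec_pos h
      have h2 := hM.posSemidef.dotProduct_mulVec_nonneg b
      simp only [star_trivial] at this h2
      linarith
    · have := hM.dotProduct_mulVec_pos h
      have h2 := hM.posSemidef.dotProduct_mulVec_nonneg a
      simp only [star_trivial] at this h2
      linarith
  intro h0
  rw [h0] at key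
  simp only [Complex.zero_re] at key
  linarith

/-- Global solvability of the matrix Riccati equation `Ḣ + H² = F`, `H(0) = H₀` on
`[0,T]`, when `F` is continuous, real and symmetric and `H₀` is complex symmetric with
positive definite imaginary part: the solution exists on all of `[0,T]` and is given by
`H(t) = Z(t) Y(t)⁻¹`, where `Ż = FY`, `Ẏ = Z`, `Z(0) = H₀`, `Y(0) = I`. -/
theorem matrix_riccati_global_solution {n : ℕ} {T : ℝ} (hT : 0 ≤ T)
    (F : ℝ → Matrix (Fin n) (Fin n) ℝ)
    (hFc : ContinuousOn F (Set.Icc 0 T))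
    (hFsym : ∀ t ∈ Set.Icc (0:ℝ) T, (F t)ᵀ = F t)
    (H₀ : Matrix (Fin n) (Fin n) ℂ)
    (hH₀sym : H₀ᵀ = H₀)
    (hH₀im : (H₀.map Complex.im).PosDef)
    (Z Y : ℝ → Matrix (Fin n) (Fin n) ℂ)
    (hZ : ∀ t ∈ Set.Icc (0:ℝ) T, HasDerivAt Z ((F t).map (fun x : ℝ => (x : ℂ)) * Y t) t)
    (hY : ∀ t ∈ Set.Icc (0:ℝ) T, HasDerivAt Y (Z t) t)
    (hZ0 : Z 0 = H₀) (hY0 : Y 0 = 1) :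
    ∃ H : ℝ → Matrix (Fin n) (Fin n) ℂ, H 0 = H₀ ∧
      ∀ t ∈ Set.Icc (0:ℝ) T,
        H t = Z t * (Y t)⁻¹ ∧
        HasDerivWithinAt H ((F t).map (fun x : ℝ => (x : ℂ)) - H t * H t)
          (Set.Icc 0 T) t := by
  classical
  set Fc : ℝ → Matrix (Fin n) (Fin n) ℂ := fun t => (F t).map (fun x : ℝ => (x : ℂ)) with hFcdef
  -- Fc is Hermitian on Icc
  have hFcH : ∀ t ∈ Set.Icc (0:ℝ) T, (Fc t)ᴴ = Fc t := by
    intro t ht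
    ext i j
    have hsym : F t j i = F t i j := by
      have := congrFun (congrFun (hFsym t ht) i) j
      simpa [Matrix.transpose_apply] using this
    simp [Fc, Matrix.conjTranspose_apply, Matrix.map_apply, Complex.conj_ofReal, hsym]
  -- the conserved quantity
  set W : ℝ → Matrix (Fin n) (Fin n) ℂ := fun s => (Y s)ᴴ * Z s - (Z s)ᴴ * Y s with hWdef
  have hW : ∀ t ∈ Set.Icc (0:ℝ) T, HasDerivAt W 0 t := by
    intro t ht
    have d1 := matMulDeriv (matCTDeriv (hY t ht)) (hZ t ht)
    have d2 := matMulDeriv (matCTDeriv (hZ t ht)) (hY t ht)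
    have := d1.sub d2
    refine this.congr_deriv ?_
    have h1 : (Fc t * Y t)ᴴ = (Y t)ᴴ * Fc t := by
      rw [Matrix.conjTranspose_mul, hFcH t ht]
    rw [h1]
    simp only [Matrix.mul_assoc]
    abel
  have hWconst : ∀ t ∈ Set.Icc (0:ℝ) T, W t = W 0 :=
    constant_of_has_deriv_right_zero
      (fun x hx => (hW x hx).continuousAt.continuousWithinAt)
      (fun x hx => (hW x ⟨hx.1, le_of_lt hx.2⟩).hasDerivWithinAt)
  have hW0 : W 0 = (2 * Complex.I) • ((H₀.map Complex.im).map (fun x : ℝ => (x : ℂ))) := by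
    ext i j
    have hsym : H₀ j i = H₀ i j := by
      have := congrFun (congrFun hH₀sym i) j
      simpa [Matrix.transpose_apply] using this
    simp only [hWdef, hY0, hZ0, Matrix.conjTranspose_one, Matrix.one_mul, Matrix.mul_one,
      Matrix.sub_apply, Matrix.conjTranspose_apply, Matrix.smul_apply, Matrix.map_apply,
      smul_eq_mul, hsym]
    rw [show star (H₀ i j) = (starRingEnd ℂ) (H₀ i j) from rfl, Complex.sub_conj]
    push_cast
    ring
  -- Y t is invertible on Icc
  have hYunit : ∀ t ∈ Set.Icc (0:ℝ) T, IsUnit (Y t).det := by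
    intro t ht
    rw [isUnit_iff_ne_zero]
    intro hdet0
    obtain ⟨v, hv, hvY⟩ := (Matrix.exists_mulVec_eq_zero_iff).mpr hdet0
    have c0 : star v ⬝ᵥ (W t *ᵥ v) = 0 := by
      have e1 : ((Y t)ᴴ * Z t) *ᵥ v = (Y t)ᴴ *ᵥ (Z t *ᵥ v) := (Matrix.mulVec_mulVec _ _ _).symm
      have e2 : ((Z t)ᴴ * Y t) *ᵥ v = 0 := by
        rw [← Matrix.mulVec_mulVec, hvY, Matrix.mulVec_zero]
      have e3 : star v ⬝ᵥ ((Y t)ᴴ *ᵥ (Z t *ᵥ v)) = 0 := by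
        rw [Matrix.dotProduct_mulVec, ← Matrix.star_mulVec, hvY]
        simp
      simp only [hWdef, Matrix.sub_mulVec, dotProduct_sub, e1, e2, e3,
        dotProduct_zero, sub_zero]
    rw [hWconst t ht, hW0, Matrix.smul_mulVec, dotProduct_smul, smul_eq_mul] at c0
    have h2I : (2 * Complex.I) ≠ 0 := by
      simp [Complex.I_ne_zero]
    exact posdef_dot hH₀im hv (by
      rcases mul_eq_zero.mp c0 with h | h
      · exact absurd h h2I
      · exact h)
  -- the solution
  refine ⟨fun s => Z s * (Y s)⁻¹, ?_, ?_⟩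
  · show Z 0 * (Y 0)⁻¹ = H₀
    rw [hZ0, hY0, inv_one, Matrix.mul_one]
  intro t ht
  refine ⟨rfl, ?_⟩
  have hdet_ne : (Y t).det ≠ 0 := (hYunit t ht).ne_zero
  have hYent : ∀ i j, DifferentiableAt ℝ (fun s => Y s i j) t :=
    matEntryD.mp (hY t ht).differentiableAt
  have hinvD : DifferentiableAt ℝ (fun s => (Y s)⁻¹) t := matInvD hYent hdet_ne
  set D : Matrix (Fin n) (Fin n) ℂ := deriv (fun s => (Y s)⁻¹) t with hDdef
  have hD : HasDerivAt (fun s => (Y s)⁻¹) D t := hinvD.hasDerivAt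
  -- pin down D
  have hdetC : ContinuousAt (fun s => (Y s).det) t := (matDetD hYent).continuousAt
  have hne : ∀ᶠ s in nhds t, (Y s).det ≠ 0 := hdetC.eventually_ne hdet_ne
  have heq : (fun s => Y s * (Y s)⁻¹) =ᶠ[nhds t] (fun _ => (1 : Matrix (Fin n) (Fin n) ℂ)) :=
    hne.mono fun s hs => Matrix.mul_nonsing_inv _ (Ne.isUnit hs)
  have hg0 : HasDerivAt (fun s => Y s * (Y s)⁻¹) 0 t :=
    (hasDerivAt_const t (1 : Matrix (Fin n) (Fin n) ℂ)).congr_of_eventuallyEq heq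
  have hg1 : HasDerivAt (fun s => Y s * (Y s)⁻¹) (Z t * (Y t)⁻¹ + Y t * D) t :=
    matMulDeriv (hY t ht) hD
  have hzero : Z t * (Y t)⁻¹ + Y t * D = 0 := hg1.unique hg0
  have hYD : Y t * D = -(Z t * (Y t)⁻¹) := by
    rw [eq_neg_iff_add_eq_zero, add_comm]
    exact hzero
  have hDval : D = -((Y t)⁻¹ * (Z t * (Y t)⁻¹)) := by
    calc D = ((Y t)⁻¹ * Y t) * D := by rw [Matrix.nonsing_inv_mul _ (hYunit t ht), Matrix.one_mul]
    _ = (Y t)⁻¹ * (Y t * D) := by rw [Matrix.mul_assoc]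
    _ = -((Y t)⁻¹ * (Z t * (Y t)⁻¹)) := by rw [hYD, Matrix.mul_neg]
  have hH : HasDerivAt (fun s => Z s * (Y s)⁻¹)
      (Fc t * Y t * (Y t)⁻¹ + Z t * D) t := matMulDeriv (hZ t ht) hD
  have hval : Fc t * Y t * (Y t)⁻¹ + Z t * D
      = Fc t - (Z t * (Y t)⁻¹) * (Z t * (Y t)⁻¹) := by
    rw [hDval, Matrix.mul_assoc (Fc t), Matrix.mul_nonsing_inv _ (hYunit t ht), Matrix.mul_one,
      Matrix.mul_neg, sub_eq_add_neg]
    congr 2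
    simp only [Matrix.mul_assoc]
  exact (hH.congr_deriv hval).hasDerivWithinAt
end

section
/- In the scalar case, if F: [0,T] → ℝ is continuous and H₀ ∈ ℂ with Im(H₀) > 0, then the solution H(t) of the Riccati equation Ḣ + H² = F with H(0) = H₀ exists on all of [0,T] and satisfies Im(H(t)) > 0 for all t. -/
open Set

lemma hasDerivWithinAt_singleton' {E : Type*} [NormedAddCommGroup E] [NormedSpace ℝ E]
    (f : ℝ → E) (x : ℝ) (d : E) : HasDerivWithinAt f d {x} x := by
  rw [hasDerivWithinAt_iff_tendsto_slope]
  simp [Set.diff_self]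

lemma glue_deriv {E : Type*} [NormedAddCommGroup E] [NormedSpace ℝ E]
    (v : ℝ → E → E) {a b c : ℝ} (hab : a ≤ b) (hbc : b ≤ c) {f g : ℝ → E}
    (hfg : f b = g b)
    (hf : ∀ t ∈ Icc a b, HasDerivWithinAt f (v t (f t)) (Icc a b) t)
    (hg : ∀ t ∈ Icc b c, HasDerivWithinAt g (v t (g t)) (Icc b c) t) :
    ∃ h : ℝ → E, h a = f a ∧ ∀ t ∈ Icc a c, HasDerivWithinAt h (v t (h t)) (Icc a c) t := by
  classical
  set h : ℝ → E := fun t => if t ≤ b then f t else g t with hdef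
  have eqf : EqOn h f (Icc a b) := fun t ht => if_pos ht.2
  have eqg : EqOn h g (Icc b c) := by
    intro t ht
    by_cases h' : t ≤ b
    · have : t = b := le_antisymm h' ht.1
      simp [hdef, h', this, hfg]
    · simp [hdef, h']
  have Hf : ∀ t ∈ Icc a b, HasDerivWithinAt h (v t (h t)) (Icc a b) t := by
    intro t ht
    have := (hf t ht).congr eqf (eqf ht)
    rwa [eqf ht]
  have Hg : ∀ t ∈ Icc b c, HasDerivWithinAt h (v t (h t)) (Icc b c) t := by
    intro t ht
    have := (hg t ht).congr eqg (eqg ht)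
    rwa [eqg ht]
  refine ⟨h, eqf ⟨le_rfl, hab⟩, ?_⟩
  intro t ht
  rcases lt_trichotomy t b with h1 | h1 | h1
  · have htab : t ∈ Icc a b := ⟨ht.1, h1.le⟩
    refine (Hf t htab).mono_of_mem_nhdsWithin ?_
    refine Filter.mem_of_superset (inter_mem_nhdsWithin (Icc a c) (Iio_mem_nhds h1)) ?_
    rintro s ⟨hs1, hs2⟩
    exact ⟨hs1.1, (le_of_lt hs2)⟩
  · subst h1
    have := (Hf t ⟨ht.1, le_rfl⟩).union (Hg t ⟨le_rfl, hbc⟩)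
    rwa [Icc_union_Icc_eq_Icc ht.1 hbc] at this
  · have htbc : t ∈ Icc b c := ⟨h1.le, ht.2⟩
    refine (Hg t htbc).mono_of_mem_nhdsWithin ?_
    refine Filter.mem_of_superset (inter_mem_nhdsWithin (Icc a c) (Ioi_mem_nhds h1)) ?_
    rintro s ⟨hs1, hs2⟩
    exact ⟨hs2.le, hs1.2⟩


noncomputable def riccV (F : ℝ → ℝ) : ℝ → ℂ × ℂ → ℂ × ℂ := fun t p => ((F t : ℂ) * p.2, p.1)

lemma riccV_local {T : ℝ} (hT : 0 ≤ T) (F : ℝ → ℝ) (hFc : ContinuousOn F (Icc 0 T))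
    {K : ℝ} (hK1 : 1 ≤ K) (hKF : ∀ t ∈ Icc 0 T, |F t| ≤ K)
    {a : ℝ} (ha : a ∈ Icc 0 T) (x₀ : ℂ × ℂ) :
    ∃ f : ℝ → ℂ × ℂ, f a = x₀ ∧
      ∀ t ∈ Icc a (min (a + 1/(2*K)) T),
        HasDerivWithinAt f (riccV F t (f t)) (Icc a (min (a + 1/(2*K)) T)) t := by
  have hK0 : 0 < K := lt_of_lt_of_le one_pos hK1
  set ε : ℝ := 1/(2*K) with hε
  have hε0 : 0 < ε := by positivity
  set b : ℝ := min (a + ε) T with hb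
  have hab : a ≤ b := le_min (by linarith) ha.2
  have hsub : Icc a b ⊆ Icc 0 T := Icc_subset_Icc ha.1 (min_le_right _ _)
  set Knn : NNReal := ⟨K, hK0.le⟩ with hKnn
  have hKnncoe : (Knn : ℝ) = K := rfl
  have hnorm : ∀ t ∈ Icc 0 T, ∀ p : ℂ × ℂ, ‖riccV F t p‖ ≤ K * ‖p‖ := by
    intro t ht p
    have h1 : ‖riccV F t p‖ = max ‖(F t : ℂ) * p.2‖ ‖p.1‖ := rfl
    rw [h1, norm_mul, Complex.norm_real, Real.norm_eq_abs]
    have hp1 : ‖p.1‖ ≤ ‖p‖ := le_max_left _ _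
    have hp2 : ‖p.2‖ ≤ ‖p‖ := le_max_right _ _
    have h2 : |F t| * ‖p.2‖ ≤ K * ‖p‖ :=
      mul_le_mul (hKF t ht) hp2 (norm_nonneg _) hK0.le
    have h3 : ‖p.1‖ ≤ K * ‖p‖ := le_trans hp1 (le_mul_of_one_le_left (norm_nonneg _) hK1)
    exact max_le h2 h3
  have hpl : IsPicardLindelof (riccV F) (⟨a, le_rfl, hab⟩ : Icc a b) x₀
      ⟨‖x₀‖ + 1, by positivity⟩ 0 ⟨K * (2 * ‖x₀‖ + 1), by positivity⟩ Knn := by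
    constructor
    · intro t ht
      apply LipschitzWith.lipschitzOnWith
      apply LipschitzWith.of_dist_le_mul
      intro p q
      rw [dist_eq_norm, dist_eq_norm, hKnncoe]
      have : riccV F t p - riccV F t q = riccV F t (p - q) := by
        simp [riccV, Prod.ext_iff]; ring
      rw [this]
      exact hnorm t (hsub ht) _
    · intro x _
      apply ContinuousOn.prodMk
      · exact ((Complex.continuous_ofReal.comp_continuousOn (hFc.mono hsub)).mul continuousOn_const)
      · exact continuousOn_const
    · intro t ht x hx
      have hxn : ‖x‖ ≤ 2 * ‖x₀‖ + 1 := by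
        have : ‖x - x₀‖ ≤ ‖x₀‖ + 1 := mem_closedBall_iff_norm.1 hx
        calc ‖x‖ = ‖x - x₀ + x₀‖ := by ring_nf
          _ ≤ ‖x - x₀‖ + ‖x₀‖ := norm_add_le _ _
          _ ≤ (‖x₀‖ + 1) + ‖x₀‖ := by linarith
          _ ≤ 2 * ‖x₀‖ + 1 := by linarith
      calc ‖riccV F t x‖ ≤ K * ‖x‖ := hnorm t (hsub ht) x
        _ ≤ K * (2 * ‖x₀‖ + 1) := by nlinarith [norm_nonneg x]
    · show K * (2 * ‖x₀‖ + 1) * max (b - a) (a - a) ≤ (‖x₀‖ + 1) - ((0 : NNReal) : ℝ)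
      rw [NNReal.coe_zero, sub_zero]
      have h1 : max (b - a) (a - a) ≤ ε := by
        apply max_le
        · have : b ≤ a + ε := min_le_left _ _
          linarith
        · linarith
      calc K * (2 * ‖x₀‖ + 1) * max (b - a) (a - a) ≤ K * (2 * ‖x₀‖ + 1) * ε := by
            apply mul_le_mul_of_nonneg_left h1; positivity
        _ = ‖x₀‖ + 1/2 := by field_simp [hε]; rw [hε]; field_simp
        _ ≤ ‖x₀‖ + 1 := by linarith
  exact hpl.exists_eq_forall_mem_Icc_hasDerivWithinAt₀

lemma riccV_global {T : ℝ} (hT : 0 ≤ T) (F : ℝ → ℝ) (hFc : ContinuousOn F (Icc 0 T))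
    (x₀ : ℂ × ℂ) :
    ∃ f : ℝ → ℂ × ℂ, f 0 = x₀ ∧
      ∀ t ∈ Icc 0 T, HasDerivWithinAt f (riccV F t (f t)) (Icc 0 T) t := by
  obtain ⟨M, hM⟩ := (isCompact_Icc).exists_bound_of_continuousOn hFc
  set K : ℝ := max M 1 with hKdef
  have hK1 : 1 ≤ K := le_max_right _ _
  have hK0 : 0 < K := lt_of_lt_of_le one_pos hK1
  have hKF : ∀ t ∈ Icc 0 T, |F t| ≤ K := fun t ht =>
    le_trans (by simpa using hM t ht) (le_max_left _ _)
  set ε : ℝ := 1/(2*K) with hε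
  have hε0 : 0 < ε := by positivity
  have aux : ∀ n : ℕ, ∃ f : ℝ → ℂ × ℂ, f 0 = x₀ ∧
      ∀ t ∈ Icc 0 (min (n * ε) T),
        HasDerivWithinAt f (riccV F t (f t)) (Icc 0 (min (n * ε) T)) t := by
    intro n
    induction n with
    | zero =>
      refine ⟨fun _ => x₀, rfl, ?_⟩
      intro t ht
      simp only [Nat.cast_zero, zero_mul, min_eq_left hT] at ht ⊢
      have : t = 0 := le_antisymm ht.2 ht.1
      subst this
      rw [Icc_self]
      exact hasDerivWithinAt_singleton' _ _ _
    | succ n ih =>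
      obtain ⟨f, hf0, hf⟩ := ih
      set a : ℝ := min (n * ε) T with hadef
      have ha : a ∈ Icc 0 T := ⟨le_min (by positivity) hT, min_le_right _ _⟩
      obtain ⟨g, hg0, hg⟩ := riccV_local hT F hFc hK1 hKF ha (f a)
      set c : ℝ := min ((n + 1 : ℕ) * ε) T with hcdef
      have hac : a ≤ c := min_le_min (by push_cast; nlinarith) le_rfl
      have hcb : c ≤ min (a + ε) T := by
        apply le_min _ (min_le_right _ _)
        rcases le_total ((n : ℝ) * ε) T with h | h
        · have : a = (n : ℝ) * ε := min_eq_left h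
          rw [this]
          calc c ≤ ((n + 1 : ℕ) : ℝ) * ε := min_le_left _ _
            _ = (n : ℝ) * ε + ε := by push_cast; ring
        · have : a = T := min_eq_right h
          rw [this]
          exact le_trans (min_le_right _ _) (by linarith)
      have hg' : ∀ t ∈ Icc a c, HasDerivWithinAt g (riccV F t (g t)) (Icc a c) t :=
        fun t ht => (hg t (Icc_subset_Icc_right hcb ht)).mono (Icc_subset_Icc_right hcb)
      obtain ⟨h, h0, hh⟩ := glue_deriv (riccV F) ha.1 hac hg0.symm hf hg'
      exact ⟨h, by rw [h0, hf0], hh⟩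
  obtain ⟨n, hn⟩ := exists_nat_ge (T / ε)
  have hTn : T ≤ n * ε := by
    rw [div_le_iff₀ hε0] at hn; linarith
  obtain ⟨f, hf0, hf⟩ := aux n
  rw [min_eq_right hTn] at hf
  exact ⟨f, hf0, hf⟩
/-- The scalar Riccati equation `Ḣ + H² = F`, `H(0) = H₀` with `F : [0,T] → ℝ`
continuous and `Im H₀ > 0` has a solution on all of `[0,T]`, which moreover satisfies
`Im H(t) > 0` for all `t ∈ [0,T]`. -/
theorem scalar_riccati_global_solution {T : ℝ} (hT : 0 ≤ T)
    (F : ℝ → ℝ) (hFc : ContinuousOn F (Set.Icc 0 T))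
    (H₀ : ℂ) (hH₀ : 0 < H₀.im) :
    ∃ H : ℝ → ℂ, H 0 = H₀ ∧
      ∀ t ∈ Set.Icc (0:ℝ) T,
        HasDerivWithinAt H ((F t : ℂ) - H t ^ 2) (Set.Icc 0 T) t ∧ 0 < (H t).im := by
  obtain ⟨f, hf0, hf⟩ := riccV_global hT F hFc (H₀, 1)
  set S := Set.Icc (0:ℝ) T with hS
  set z : ℝ → ℂ := fun t => (f t).1 with hzdef
  set y : ℝ → ℂ := fun t => (f t).2 with hydef
  have hz0 : z 0 = H₀ := by simp [hzdef, hf0]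
  have hy0 : y 0 = 1 := by simp [hydef, hf0]
  have hz : ∀ t ∈ S, HasDerivWithinAt z ((F t : ℂ) * y t) S t := by
    intro t ht
    have := (ContinuousLinearMap.fst ℝ ℂ ℂ).hasFDerivAt.comp_hasDerivWithinAt t (hf t ht)
    exact this
  have hy : ∀ t ∈ S, HasDerivWithinAt y (z t) S t := by
    intro t ht
    have := (ContinuousLinearMap.snd ℝ ℂ ℂ).hasFDerivAt.comp_hasDerivWithinAt t (hf t ht)
    exact this
  -- the Wronskian
  set W : ℝ → ℂ := fun t => star (z t) * y t - star (y t) * z t with hWdef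
  have hW : ∀ t ∈ S, HasDerivWithinAt W 0 S t := by
    intro t ht
    have h1 := ((hz t ht).star.mul (hy t ht)).sub (((hy t ht).star.mul (hz t ht)))
    refine h1.congr_deriv ?_
    simp only [Complex.star_def, map_mul, Complex.conj_ofReal]
    ring
  have hWcont : ContinuousOn W S := fun t ht => (hW t ht).continuousWithinAt
  have hWconst : ∀ t ∈ S, W t = W 0 := by
    apply constant_of_has_deriv_right_zero hWcont
    intro x hx
    exact (hW x ⟨hx.1, hx.2.le⟩).mono_of_mem_nhdsWithin (Icc_mem_nhdsGE_of_mem hx)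
  have key : ∀ t ∈ S, (z t).im * (y t).re - (z t).re * (y t).im = H₀.im := by
    intro t ht
    have h1 := congrArg Complex.im (hWconst t ht)
    simp only [hWdef, hz0, hy0, Complex.star_def, Complex.sub_im, Complex.mul_im,
      Complex.conj_re, Complex.conj_im, Complex.one_re, Complex.one_im] at h1
    linarith
  have hyne : ∀ t ∈ S, y t ≠ 0 := by
    intro t ht h0
    have := key t ht
    rw [h0] at this
    simp at this
    linarith
  refine ⟨fun t => z t / y t, by show z 0 / y 0 = H₀; rw [hz0, hy0, div_one], ?_⟩
  intro t ht
  constructor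
  · have hd := (hz t ht).div (hy t ht) (hyne t ht)
    refine hd.congr_deriv ?_
    symm
    field_simp [hyne t ht]
  · have hns : 0 < Complex.normSq (y t) := Complex.normSq_pos.2 (hyne t ht)
    have him : (z t / y t).im =
        ((z t).im * (y t).re - (z t).re * (y t).im) / Complex.normSq (y t) := by
      rw [Complex.div_im]; ring
    rw [him, key t ht]
    exact div_pos hH₀ hns
end
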